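/- Let W(l) = ( l l l ; 0 0 0 ) denote the Wigner 3j symbol with equal degrees and zero magnetic numbers, given for even l by W(l)² = [(3l/2)!]² / [(l/2)!]^6 · [l!]³/(3l+1)!. Then lim_{l→∞, l even} l² W(l)² = 2/(π√3). -/

import Mathlib

open Filter Real

/-- Square of the Wigner 3j symbol `(l l l; 0 0 0)` for even `l = 2k`:
`W(2k)² = [(3k)!]² / [k!]^6 · [(2k)!]³ / (6k+1)!`. -/
noncomputable def wigner3jSqEqual (k : ℕ) : ℝ :=
  ((Nat.factorial (3 * k) : ℝ)) ^ 2 / ((Nat.factorial k : ℝ)) ^ 6 *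
    ((Nat.factorial (2 * k) : ℝ)) ^ 3 / (Nat.factorial (6 * k + 1) : ℝ)

lemma stirling_pos (n : ℕ) (hn : 0 < n) : 0 < Stirling.stirlingSeq n := by
  obtain ⟨m, rfl⟩ := Nat.exists_eq_add_of_lt hn
  simpa [Nat.add_comm] using Stirling.stirlingSeq'_pos m

lemma fact_eq_stirling (n : ℕ) (hn : 0 < n) :
    (Nat.factorial n : ℝ) =
      Stirling.stirlingSeq n * (Real.sqrt (2 * n) * ((n : ℝ) / Real.exp 1) ^ n) := by
  have h1 : (0:ℝ) < Real.sqrt (2 * n) * ((n : ℝ) / Real.exp 1) ^ n := by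
    have hn' : (0:ℝ) < n := by exact_mod_cast hn
    positivity
  rw [Stirling.stirlingSeq, div_mul_cancel₀ _ h1.ne']

lemma key_eq (k : ℕ) (hk : 1 ≤ k) :
    ((2 * k : ℕ) : ℝ) ^ 2 * wigner3jSqEqual k =
      (Stirling.stirlingSeq (3 * k)) ^ 2 * (Stirling.stirlingSeq (2 * k)) ^ 3 /
          ((Stirling.stirlingSeq k) ^ 6 * Stirling.stirlingSeq (6 * k)) *
        (4 * Real.sqrt 3 * (k : ℝ) / (6 * (k : ℝ) + 1)) := by
  have hk0 : (0:ℝ) < (k : ℝ) := by exact_mod_cast hk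
  set K : ℝ := (k : ℝ) with hK
  set e : ℝ := Real.exp 1 with he
  have he0 : (0:ℝ) < e := Real.exp_pos 1
  unfold wigner3jSqEqual
  rw [show 6 * k + 1 = (6 * k) + 1 from rfl, Nat.factorial_succ]
  push_cast
  rw [fact_eq_stirling (3 * k) (by omega), fact_eq_stirling (2 * k) (by omega),
    fact_eq_stirling k (by omega), fact_eq_stirling (6 * k) (by omega)]
  push_cast
  set s1 := Stirling.stirlingSeq k
  set s2 := Stirling.stirlingSeq (2 * k)
  set s3 := Stirling.stirlingSeq (3 * k)
  set s6 := Stirling.stirlingSeq (6 * k)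
  -- power identity
  have hP : ((3 * K / e) ^ (3 * k)) ^ 2 * ((2 * K / e) ^ (2 * k)) ^ 3
      = ((K / e) ^ k) ^ 6 * ((6 * K / e) ^ (6 * k)) := by
    rw [← pow_mul, ← pow_mul, ← pow_mul,
      show 3 * k * 2 = 6 * k by ring, show 2 * k * 3 = 6 * k by ring,
      show k * 6 = 6 * k by ring, ← mul_pow, ← mul_pow]
    congr 1
    field_simp
    ring
  -- sqrt identity
  have h4 : Real.sqrt (2 * (2 * K)) = 2 * Real.sqrt K := by
    rw [show 2 * (2 * K) = 4 * K by ring, Real.sqrt_mul (by norm_num : (0:ℝ) ≤ 4),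
      show (4:ℝ) = 2 ^ 2 by norm_num, Real.sqrt_sq (by norm_num : (0:ℝ) ≤ 2)]
  have h12 : Real.sqrt (2 * (6 * K)) = 2 * (Real.sqrt 3 * Real.sqrt K) := by
    rw [show 2 * (6 * K) = 4 * (3 * K) by ring, Real.sqrt_mul (by norm_num : (0:ℝ) ≤ 4),
      show (4:ℝ) = 2 ^ 2 by norm_num, Real.sqrt_sq (by norm_num : (0:ℝ) ≤ 2),
      Real.sqrt_mul (by norm_num : (0:ℝ) ≤ 3)]
  have h6sq : Real.sqrt (2 * (3 * K)) ^ 2 = 6 * K := by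
    rw [Real.sq_sqrt (by positivity)]; ring
  have h2sq : Real.sqrt (2 * K) ^ 2 = 2 * K := Real.sq_sqrt (by positivity)
  have hKsq : Real.sqrt K ^ 2 = K := Real.sq_sqrt hk0.le
  have h3sq : Real.sqrt 3 ^ 2 = 3 := Real.sq_sqrt (by norm_num)
  have hS : Real.sqrt (2 * (3 * K)) ^ 2 * Real.sqrt (2 * (2 * K)) ^ 3 * K
      = Real.sqrt 3 * (Real.sqrt (2 * K) ^ 6 * Real.sqrt (2 * (6 * K))) := by
    rw [h4, h12, h6sq, show Real.sqrt (2*K) ^ 6 = (Real.sqrt (2*K) ^ 2) ^ 3 by ring, h2sq]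
    linear_combination (48 * K ^ 2 * Real.sqrt K) * hKsq - (16 * K ^ 3 * Real.sqrt K) * h3sq
  -- split LHS as a product of ratios
  have split : (2 * K) ^ 2 *
      ((s3 * (Real.sqrt (2 * (3 * K)) * (3 * K / e) ^ (3 * k))) ^ 2 /
          (s1 * (Real.sqrt (2 * K) * (K / e) ^ k)) ^ 6 *
        (s2 * (Real.sqrt (2 * (2 * K)) * (2 * K / e) ^ (2 * k))) ^ 3 /
        ((6 * K + 1) * (s6 * (Real.sqrt (2 * (6 * K)) * (6 * K / e) ^ (6 * k)))))
      = s3 ^ 2 * s2 ^ 3 / (s1 ^ 6 * s6) *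
        ((((3 * K / e) ^ (3 * k)) ^ 2 * ((2 * K / e) ^ (2 * k)) ^ 3) /
          (((K / e) ^ k) ^ 6 * ((6 * K / e) ^ (6 * k)))) *
        ((Real.sqrt (2 * (3 * K)) ^ 2 * Real.sqrt (2 * (2 * K)) ^ 3) /
          (Real.sqrt (2 * K) ^ 6 * Real.sqrt (2 * (6 * K)))) *
        (4 * K ^ 2 / (6 * K + 1)) := by
    have hs1 : s1 ≠ 0 := (stirling_pos k (by omega)).ne'
    have hs6 : s6 ≠ 0 := (stirling_pos (6 * k) (by omega)).ne'
    have hsq2 : Real.sqrt (2 * K) ≠ 0 := by positivity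
    have hsq6 : Real.sqrt (2 * (6 * K)) ≠ 0 := by positivity
    have hpk : ((K / e) ^ k) ≠ 0 := by positivity
    have hp6k : ((6 * K / e) ^ (6 * k)) ≠ 0 := by positivity
    have h6K1 : (6 * K + 1) ≠ 0 := by positivity
    field_simp
    ring
  have hrat : (((3 * K / e) ^ (3 * k)) ^ 2 * ((2 * K / e) ^ (2 * k)) ^ 3) /
      (((K / e) ^ k) ^ 6 * ((6 * K / e) ^ (6 * k))) = 1 := by
    rw [hP]; exact div_self (by positivity)
  have hsqr : (Real.sqrt (2 * (3 * K)) ^ 2 * Real.sqrt (2 * (2 * K)) ^ 3) /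
      (Real.sqrt (2 * K) ^ 6 * Real.sqrt (2 * (6 * K))) = Real.sqrt 3 / K := by
    rw [div_eq_div_iff (by positivity) hk0.ne']
    linear_combination hS
  rw [split, hrat, hsqr]
  have hs1 : s1 ≠ 0 := (stirling_pos k (by omega)).ne'
  have hs6 : s6 ≠ 0 := (stirling_pos (6 * k) (by omega)).ne'
  field_simp

/-- `lim_{l→∞, l even} l² W(l)² = 2/(π√3)`. -/
theorem wigner_equal_limit :
    Tendsto (fun k : ℕ => ((2 * k : ℕ) : ℝ) ^ 2 * wigner3jSqEqual k) atTop
      (nhds (2 / (Real.pi * Real.sqrt 3))) := by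
  have hmul : ∀ c : ℕ, 0 < c → Tendsto (fun k : ℕ => c * k) atTop atTop := by
    intro c hc
    exact tendsto_atTop_mono (fun n => Nat.le_mul_of_pos_left n hc) tendsto_id
  have h3 : Tendsto (fun k : ℕ => Stirling.stirlingSeq (3 * k)) atTop (nhds (Real.sqrt π)) :=
    Stirling.tendsto_stirlingSeq_sqrt_pi.comp (hmul 3 (by norm_num))
  have h2 : Tendsto (fun k : ℕ => Stirling.stirlingSeq (2 * k)) atTop (nhds (Real.sqrt π)) :=
    Stirling.tendsto_stirlingSeq_sqrt_pi.comp (hmul 2 (by norm_num))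
  have h1 : Tendsto (fun k : ℕ => Stirling.stirlingSeq k) atTop (nhds (Real.sqrt π)) :=
    Stirling.tendsto_stirlingSeq_sqrt_pi
  have h6 : Tendsto (fun k : ℕ => Stirling.stirlingSeq (6 * k)) atTop (nhds (Real.sqrt π)) :=
    Stirling.tendsto_stirlingSeq_sqrt_pi.comp (hmul 6 (by norm_num))
  have hπ : (0:ℝ) < Real.sqrt π := Real.sqrt_pos.mpr Real.pi_pos
  have hA : Tendsto (fun k : ℕ =>
      (Stirling.stirlingSeq (3 * k)) ^ 2 * (Stirling.stirlingSeq (2 * k)) ^ 3 /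
        ((Stirling.stirlingSeq k) ^ 6 * Stirling.stirlingSeq (6 * k))) atTop
      (nhds ((Real.sqrt π) ^ 2 * (Real.sqrt π) ^ 3 / ((Real.sqrt π) ^ 6 * Real.sqrt π))) :=
    ((h3.pow 2).mul (h2.pow 3)).div ((h1.pow 6).mul h6) (by positivity)
  have hB0 : Tendsto (fun k : ℕ => 4 * Real.sqrt 3 / (6 + 1 / (k:ℝ))) atTop
      (nhds (4 * Real.sqrt 3 / (6 + 0))) :=
    tendsto_const_nhds.div (tendsto_const_nhds.add tendsto_one_div_atTop_nhds_zero_nat)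
      (by norm_num)
  have hB : Tendsto (fun k : ℕ => 4 * Real.sqrt 3 * (k:ℝ) / (6 * (k:ℝ) + 1)) atTop
      (nhds (4 * Real.sqrt 3 / 6)) := by
    rw [show (4 * Real.sqrt 3 / 6 : ℝ) = 4 * Real.sqrt 3 / (6 + 0) by norm_num]
    refine hB0.congr' ?_
    filter_upwards [eventually_ge_atTop 1] with k hk
    have hk0 : ((k:ℝ)) ≠ 0 := by positivity
    field_simp
  have hlim := hA.mul hB
  have hval : (Real.sqrt π) ^ 2 * (Real.sqrt π) ^ 3 / ((Real.sqrt π) ^ 6 * Real.sqrt π) *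
      (4 * Real.sqrt 3 / 6) = 2 / (Real.pi * Real.sqrt 3) := by
    have hπsq : Real.sqrt π ^ 2 = π := Real.sq_sqrt Real.pi_pos.le
    have h3sq : Real.sqrt 3 ^ 2 = 3 := Real.sq_sqrt (by norm_num)
    have h3pos : (0:ℝ) < Real.sqrt 3 := by positivity
    rw [div_mul_div_comm, div_eq_div_iff (by positivity) (by positivity)]
    linear_combination 4 * Real.pi * (Real.sqrt π) ^ 5 * h3sq - 12 * (Real.sqrt π) ^ 5 * hπsq
  rw [hval] at hlim
  refine hlim.congr' ?_
  filter_upwards [eventually_ge_atTop 1] with k hk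
  exact (key_eq k hk).symm
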